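/- Let m, J, a, b be real numbers with J + ma² ≠ 0, set c := ma/(J + ma²) and K := J + m(a² + b²). Let y1, y2 : ℝ → ℝ be twice differentiable and define u1 := ẏ1 − c·b·y1² + c·y1·y2 and u2 := ẏ2 − c·K·y1² + c·b·y1·y2. Let 𝓛 : ℝ⁴ → ℝ be 𝓛(y1, y2, v1, v2) = ½[(v1 − c·b·y1² + c·y1·y2)² + (v2 − c·K·y1² + c·b·y1·y2)²]. Then (y1, y2) satisfies the Euler–Lagrange equations d/dt[∂𝓛/∂v_i (y1, y2, ẏ1, ẏ2)] = ∂𝓛/∂y_i (y1, y2, ẏ1, ẏ2) for i = 1, 2 at every t if and only if u̇1 = c·(y2 − 2b·y1)·u1 + c·(b·y2 − 2K·y1)·u2 and u̇2 = c·y1·u1 + c·b·y1·u2 at every t. -/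

import Mathlib

private lemma aux_v (A B C x : ℝ) :
    deriv (fun v : ℝ => (1/2) * ((v - A + B)^2 + C)) x = x - A + B := by
  have h1 : HasDerivAt (fun v : ℝ => v - A + B) 1 x :=
    ((hasDerivAt_id x).sub_const A).add_const B
  have h := (((h1.pow 2).add_const C).const_mul (1/2 : ℝ))
  have := h.deriv
  refine this.trans ?_; push_cast; ring

private lemma aux_v2 (A B C x : ℝ) :
    deriv (fun v : ℝ => (1/2) * (C + (v - A + B)^2)) x = x - A + B := by
  have h1 : HasDerivAt (fun v : ℝ => v - A + B) 1 x :=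
    ((hasDerivAt_id x).sub_const A).add_const B
  have h := (((hasDerivAt_const x C).add (h1.pow 2)).const_mul (1/2 : ℝ))
  have := h.deriv
  refine this.trans ?_; push_cast; ring

private lemma aux_x (p q r u s t x : ℝ) :
    deriv (fun w : ℝ => (1/2) * ((p - q*w^2 + r*w)^2 + (u - s*w^2 + t*w)^2)) x
      = (p - q*x^2 + r*x) * (r - 2*q*x) + (u - s*x^2 + t*x) * (t - 2*s*x) := by
  have h1 : HasDerivAt (fun w : ℝ => p - q*w^2 + r*w) (r - 2*q*x) x := by
    have h := ((hasDerivAt_const x p).sub ((hasDerivAt_pow 2 x).const_mul q)).add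
      ((hasDerivAt_id x).const_mul r)
    refine h.congr_deriv ?_
    push_cast; ring
  have h2 : HasDerivAt (fun w : ℝ => u - s*w^2 + t*w) (t - 2*s*x) x := by
    have h := ((hasDerivAt_const x u).sub ((hasDerivAt_pow 2 x).const_mul s)).add
      ((hasDerivAt_id x).const_mul t)
    refine h.congr_deriv ?_
    push_cast; ring
  have h := ((h1.pow 2).add (h2.pow 2)).const_mul (1/2 : ℝ)
  refine h.deriv.trans ?_; push_cast; ring

theorem stmt16 (m J a b : ℝ) (hJ : J + m*a^2 ≠ 0)
    (c K : ℝ) (hc : c = m*a/(J + m*a^2)) (hK : K = J + m*(a^2 + b^2))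
    (y1 y2 : ℝ → ℝ)
    (hy1 : Differentiable ℝ y1) (hy1' : Differentiable ℝ (deriv y1))
    (hy2 : Differentiable ℝ y2) (hy2' : Differentiable ℝ (deriv y2))
    (L : ℝ → ℝ → ℝ → ℝ → ℝ)
    (hL : ∀ x y v1 v2 : ℝ, L x y v1 v2 =
      (1/2) * ((v1 - c*b*x^2 + c*x*y)^2 + (v2 - c*K*x^2 + c*b*x*y)^2))
    (u1 u2 : ℝ → ℝ)
    (hu1 : ∀ t, u1 t = deriv y1 t - c*b*(y1 t)^2 + c*(y1 t)*(y2 t))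
    (hu2 : ∀ t, u2 t = deriv y2 t - c*K*(y1 t)^2 + c*b*(y1 t)*(y2 t)) :
    ((∀ t : ℝ,
        deriv (fun s => deriv (fun v => L (y1 s) (y2 s) v (deriv y2 s)) (deriv y1 s)) t
          = deriv (fun w => L w (y2 t) (deriv y1 t) (deriv y2 t)) (y1 t)) ∧
     (∀ t : ℝ,
        deriv (fun s => deriv (fun v => L (y1 s) (y2 s) (deriv y1 s) v) (deriv y2 s)) t
          = deriv (fun w => L (y1 t) w (deriv y1 t) (deriv y2 t)) (y2 t)))
    ↔ (∀ t : ℝ,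
        deriv u1 t = c*(y2 t - 2*b*(y1 t))*(u1 t) + c*(b*(y2 t) - 2*K*(y1 t))*(u2 t) ∧
        deriv u2 t = c*(y1 t)*(u1 t) + c*b*(y1 t)*(u2 t)) := by
  -- inner velocity derivatives
  have hA : ∀ s : ℝ, deriv (fun v => L (y1 s) (y2 s) v (deriv y2 s)) (deriv y1 s) = u1 s := by
    intro s
    simp only [hL]
    rw [aux_v]
    rw [hu1]
  have hB : ∀ s : ℝ, deriv (fun v => L (y1 s) (y2 s) (deriv y1 s) v) (deriv y2 s) = u2 s := by
    intro s
    simp only [hL]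
    rw [aux_v2]
    rw [hu2]
  have hFA : (fun s => deriv (fun v => L (y1 s) (y2 s) v (deriv y2 s)) (deriv y1 s)) = u1 :=
    funext hA
  have hFB : (fun s => deriv (fun v => L (y1 s) (y2 s) (deriv y1 s) v) (deriv y2 s)) = u2 :=
    funext hB
  -- configuration derivatives
  have hC : ∀ t : ℝ, deriv (fun w => L w (y2 t) (deriv y1 t) (deriv y2 t)) (y1 t)
      = c*(y2 t - 2*b*(y1 t))*(u1 t) + c*(b*(y2 t) - 2*K*(y1 t))*(u2 t) := by
    intro t
    simp only [hL]
    have e : (fun w : ℝ => (1/2) * ((deriv y1 t - c*b*w^2 + c*w*(y2 t))^2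
        + (deriv y2 t - c*K*w^2 + c*b*w*(y2 t))^2))
        = fun w : ℝ => (1/2) * ((deriv y1 t - (c*b)*w^2 + (c*(y2 t))*w)^2
        + (deriv y2 t - (c*K)*w^2 + (c*b*(y2 t))*w)^2) := by
      funext w; ring_nf
    rw [e, aux_x, hu1, hu2]
    ring
  have hD : ∀ t : ℝ, deriv (fun w => L (y1 t) w (deriv y1 t) (deriv y2 t)) (y2 t)
      = c*(y1 t)*(u1 t) + c*b*(y1 t)*(u2 t) := by
    intro t
    simp only [hL]
    have e : (fun w : ℝ => (1/2) * ((deriv y1 t - c*b*(y1 t)^2 + c*(y1 t)*w)^2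
        + (deriv y2 t - c*K*(y1 t)^2 + c*b*(y1 t)*w)^2))
        = fun w : ℝ => (1/2) * (((deriv y1 t - c*b*(y1 t)^2) - (0:ℝ)*w^2 + (c*(y1 t))*w)^2
        + ((deriv y2 t - c*K*(y1 t)^2) - (0:ℝ)*w^2 + (c*b*(y1 t))*w)^2) := by
      funext w; ring_nf
    rw [e, aux_x, hu1, hu2]
    ring
  rw [hFA, hFB]
  constructor
  · rintro ⟨h1, h2⟩ t
    exact ⟨(h1 t).trans (hC t), (h2 t).trans (hD t)⟩
  · intro h
    exact ⟨fun t => (h t).1.trans (hC t).symm, fun t => (h t).2.trans (hD t).symm⟩
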